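/- Under the su(N) generator hypotheses, the Dirac matrices in the Dirac representation, and the Grassmann setup, the tensor Fierz identity for U(N) fermions holds: Σ_{a : Fin (N^2−1)} Σ_{μ,ν} ε μ · ε ν • ⟪σ μ ν, T a⟫ * ⟪σ μ ν, T a⟫ = −(3/2) • ⟪1⟫ * ⟪1⟫ + ((N−2)/(4·N)) • Σ_{μ,ν} ε μ · ε ν • ⟪σ μ ν⟫ * ⟪σ μ ν⟫ − (3/2) • ⟪γ5⟫ * ⟪γ5⟫, where μ, ν range over Fin 4. -/

import Mathlib

noncomputable section

open Complex Matrix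

/-- The Dirac γ-matrices in the Dirac representation. -/
def γm : Fin 4 → Matrix (Fin 4) (Fin 4) ℂ :=
  ![!![1,0,0,0; 0,1,0,0; 0,0,-1,0; 0,0,0,-1],
    !![0,0,0,1; 0,0,1,0; 0,-1,0,0; -1,0,0,0],
    !![0,0,0,-I; 0,0,I,0; 0,I,0,0; -I,0,0,0],
    !![0,0,1,0; 0,0,0,-1; -1,0,0,0; 0,1,0,0]]

/-- γ⁵ = i·γ⁰γ¹γ²γ³. -/
def γ5 : Matrix (Fin 4) (Fin 4) ℂ := I • (γm 0 * γm 1 * γm 2 * γm 3)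

/-- σ^{μν} = (i/2)[γ^μ, γ^ν]. -/
def σm (μ ν : Fin 4) : Matrix (Fin 4) (Fin 4) ℂ := (I / 2) • (γm μ * γm ν - γm ν * γm μ)

/-- The metric signs ε 0 = 1, ε 1 = ε 2 = ε 3 = −1 used to raise/lower indices. -/
def εs : Fin 4 → ℤ := ![1, -1, -1, -1]

/-- The totally antisymmetric Levi-Civita symbol on four indices,
normalized by ε₄ 0 1 2 3 = 1. -/
def ε4 (κ l μ ν : Fin 4) : ℤ :=
  Matrix.det (Matrix.of fun p q : Fin 4 => if ![κ, l, μ, ν] p = q then (1 : ℤ) else 0)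

/-- The Grassmann algebra generated by the 8N fermion components:
the exterior algebra of the direct sum of two copies of (Fin 4 × Fin N) → ℂ. -/
abbrev GrassAlg (N : ℕ) :=
  ExteriorAlgebra ℂ (((Fin 4 × Fin N) → ℂ) × ((Fin 4 × Fin N) → ℂ))

/-- ψ (A, i): the image in the Grassmann algebra of the standard basis vector
of the first summand indexed by (A, i). -/
def ψv (N : ℕ) (A : Fin 4) (i : Fin N) : GrassAlg N :=
  ExteriorAlgebra.ι ℂ (Pi.single (A, i) 1, 0)

/-- ψ̄ (A, i): the image in the Grassmann algebra of the standard basis vector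
of the second summand indexed by (A, i). -/
def ψbar (N : ℕ) (A : Fin 4) (i : Fin N) : GrassAlg N :=
  ExteriorAlgebra.ι ℂ (0, Pi.single (A, i) 1)

/-- The fermion bilinear B Γ i j = ∑_{A,B} Γ A B · ψ̄ (A,i) ψ (B,j). -/
def Bgr (N : ℕ) (Γ : Matrix (Fin 4) (Fin 4) ℂ) (i j : Fin N) : GrassAlg N :=
  ∑ A : Fin 4, ∑ B : Fin 4, Γ A B • (ψbar N A i * ψv N B j)

/-- ⟪Γ, X⟫ = ∑_{i,j} X i j · B Γ i j, the bilinear with Dirac structure Γ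
and color structure X. -/
def pairing (N : ℕ) (Γ : Matrix (Fin 4) (Fin 4) ℂ)
    (X : Matrix (Fin N) (Fin N) ℂ) : GrassAlg N :=
  ∑ i : Fin N, ∑ j : Fin N, X i j • Bgr N Γ i j

/-- ⟪Γ⟫ = ⟪Γ, 1⟫, the color-singlet bilinear. -/
def sing (N : ℕ) (Γ : Matrix (Fin 4) (Fin 4) ℂ) : GrassAlg N := pairing N Γ 1

/-! ### Auxiliary: Gaussian-integer version of the Dirac matrices -/

def ιg : GaussianInt := ⟨0,1⟩
def γZ : Fin 4 → Matrix (Fin 4) (Fin 4) GaussianInt :=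
  ![!![1,0,0,0; 0,1,0,0; 0,0,-1,0; 0,0,0,-1],
    !![0,0,0,1; 0,0,1,0; 0,-1,0,0; -1,0,0,0],
    !![0,0,0,-ιg; 0,0,ιg,0; 0,ιg,0,0; -ιg,0,0,0],
    !![0,0,1,0; 0,0,0,-1; -1,0,0,0; 0,1,0,0]]
def DZ (μ ν : Fin 4) : Matrix (Fin 4) (Fin 4) GaussianInt := ιg • (γZ μ * γZ ν - γZ ν * γZ μ)
def γ5Z : Matrix (Fin 4) (Fin 4) GaussianInt := ιg • (γZ 0 * γZ 1 * γZ 2 * γZ 3)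
def εZ : Fin 4 → GaussianInt := ![1, -1, -1, -1]
def SZ (A B C D : Fin 4) : GaussianInt :=
  ∑ μ : Fin 4, ∑ ν : Fin 4, εZ μ * εZ ν * (DZ μ ν A B * DZ μ ν C D)

set_option maxRecDepth 10000 in
lemma keyZ : ∀ A B C D : Fin 4, 2 * SZ A D C B =
    24 * ((if A = B then 1 else 0) * (if C = D then 1 else 0)) - SZ A B C D
      + 24 * (γ5Z A B * γ5Z C D) := by decide

lemma tcι : GaussianInt.toComplex ιg = I := by
  simp [ιg, GaussianInt.toComplex_def]

lemma hγmap (μ : Fin 4) : γm μ = (γZ μ).map GaussianInt.toComplex := by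
  fin_cases μ <;> ext A B <;> fin_cases A <;> fin_cases B <;>
    simp [γm, γZ, ιg, GaussianInt.toComplex_def, Matrix.vecHead, Matrix.vecTail,
      Function.comp]

lemma hσmap (μ ν : Fin 4) (A B : Fin 4) :
    σm μ ν A B = (1/2 : ℂ) * GaussianInt.toComplex (DZ μ ν A B) := by
  simp only [σm, DZ, Matrix.smul_apply, Matrix.sub_apply, Matrix.mul_apply, hγmap,
    Matrix.map_apply, smul_eq_mul, _root_.map_mul, _root_.map_sub, map_sum, tcι]
  ring

lemma hγ5map (A B : Fin 4) : γ5 A B = GaussianInt.toComplex (γ5Z A B) := by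
  simp only [γ5, γ5Z, Matrix.smul_apply, Matrix.mul_apply, hγmap,
    Matrix.map_apply, smul_eq_mul, _root_.map_mul, map_sum, tcι, Finset.mul_sum,
    Finset.sum_mul]

abbrev Idx4 := Fin 4 × Fin 4 × Fin 4 × Fin 4

def ScC4 : Idx4 → ℂ := fun d =>
  ∑ μ : Fin 4, ∑ ν : Fin 4,
    ((εs μ : ℂ) * (εs ν : ℂ)) * (σm μ ν d.1 d.2.1 * σm μ ν d.2.2.1 d.2.2.2)

lemma hεmap (μ : Fin 4) : GaussianInt.toComplex (εZ μ) = (εs μ : ℂ) := by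
  fin_cases μ <;> simp [εZ, εs, GaussianInt.toComplex_def]

lemma hScC (A B C D : Fin 4) :
    ScC4 (A, B, C, D) = (1/4 : ℂ) * GaussianInt.toComplex (SZ A B C D) := by
  simp only [ScC4, SZ, map_sum, _root_.map_mul, hσmap, hεmap, Finset.mul_sum]
  refine Finset.sum_congr rfl fun μ _ => Finset.sum_congr rfl fun ν _ => ?_
  ring

lemma keyC (A B C D : Fin 4) :
    ScC4 (A, D, C, B)
      = 3 * ((if A = B then (1:ℂ) else 0) * (if C = D then 1 else 0))
        - (1/2) * ScC4 (A, B, C, D) + 3 * (γ5 A B * γ5 C D) := by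
  have h := congrArg GaussianInt.toComplex (keyZ A B C D)
  simp only [_root_.map_mul, _root_.map_add, _root_.map_sub, map_ofNat,
    apply_ite GaussianInt.toComplex, _root_.map_one, _root_.map_zero] at h
  rw [hScC, hScC, hγ5map, hγ5map]
  linear_combination (1/8 : ℂ) * h

/-! ### su(N) completeness relation -/

lemma trace_stdBasis_mul {N : ℕ} (p q : Fin N) (M : Matrix (Fin N) (Fin N) ℂ) :
    (Matrix.single p q (1:ℂ) * M).trace = M q p := by
  simp [Matrix.trace, Matrix.diag, Matrix.mul_apply, Matrix.single, ite_and,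
    Matrix.of_apply, Finset.sum_ite_eq]

lemma completeness (N : ℕ) (hN : 2 ≤ N)
    (T : Fin (N ^ 2 - 1) → Matrix (Fin N) (Fin N) ℂ)
    (htr : ∀ a, (T a).trace = 0)
    (horth : ∀ a b, (T a * T b).trace = if a = b then (1 / 2 : ℂ) else 0)
    (i j k l : Fin N) :
    (∑ a, T a i j * T a k l) =
      (1/2) * ((if i = l then (1:ℂ) else 0) * (if j = k then (1:ℂ) else 0))
      - (1/(2*(N:ℂ))) * ((if i = j then (1:ℂ) else 0) * (if k = l then (1:ℂ) else 0)) := by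
  have hN0 : (N:ℂ) ≠ 0 := by
    simp only [ne_eq, Nat.cast_eq_zero]; omega
  set c : ℂ := ((Real.sqrt (2*N) : ℝ) : ℂ)⁻¹ with hc
  have hr : (Real.sqrt (2*N)) * Real.sqrt (2*N) = (2*N : ℝ) :=
    Real.mul_self_sqrt (by positivity)
  have hc2 : c * c = (2*(N:ℂ))⁻¹ := by
    rw [hc, ← mul_inv]
    have : ((Real.sqrt (2*N) : ℝ) : ℂ) * ((Real.sqrt (2*N) : ℝ) : ℂ) = (2*(N:ℂ)) := by
      rw [← Complex.ofReal_mul, hr]; push_cast; ring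
    rw [this]
  set S : Fin (N^2-1) ⊕ Unit → Matrix (Fin N) (Fin N) ℂ :=
    Sum.elim T (fun _ => c • 1) with hS
  have horthS : ∀ x y, ((S x * S y).trace) = if x = y then (1/2:ℂ) else 0 := by
    rintro (a | ⟨⟩) (b | ⟨⟩)
    · simpa [hS] using horth a b
    · simp [hS, Matrix.mul_smul, Matrix.trace_smul, htr]
    · simp [hS, Matrix.smul_mul, Matrix.trace_smul, htr]
    · simp only [hS, Sum.elim_inr, Matrix.smul_mul, Matrix.mul_smul, Matrix.trace_smul,
        Matrix.one_mul, Matrix.trace_one, if_pos rfl]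
      rw [smul_smul, smul_eq_mul, hc2]
      field_simp
      simp only [Fintype.card_fin, ↓reduceIte]
      ring
  have hli : LinearIndependent ℂ S := by
    rw [linearIndependent_iff']
    intro s g hsum x hx
    have h := congrArg (fun M => (M * S x).trace) hsum
    simp only [Finset.sum_mul, Matrix.smul_mul, Matrix.trace_sum, Matrix.trace_smul,
      Matrix.zero_mul, Matrix.trace_zero, smul_eq_mul, horthS, mul_ite, mul_zero] at h
    rw [Finset.sum_ite_eq' s x (fun i => g i * (1/2))] at h
    rw [if_pos hx] at h
    field_simp at h
    simpa using h
  have hcard : Fintype.card (Fin (N^2-1) ⊕ Unit) = Module.finrank ℂ (Matrix (Fin N) (Fin N) ℂ) := by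
    have h1 : Fintype.card (Fin (N^2-1) ⊕ Unit) = (N^2-1) + 1 := by simp
    have h2 : Module.finrank ℂ (Matrix (Fin N) (Fin N) ℂ) = N * N := by
      simp [Module.finrank_matrix]
    rw [h1, h2, ← pow_two]
    have hNpos : 0 < N := by omega
    have : 0 < N^2 := by positivity
    omega
  have hspan : ∀ X : Matrix (Fin N) (Fin N) ℂ, X ∈ Submodule.span ℂ (Set.range S) := by
    intro X
    rw [← coe_basisOfLinearIndependentOfCardEqFinrank hli hcard]
    exact Module.Basis.mem_span _ X
  have key : ∀ X : Matrix (Fin N) (Fin N) ℂ,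
      (∑ x, (2 * (X * S x).trace) • S x) = X := by
    intro X
    induction hspan X using Submodule.span_induction with
    | mem y hy =>
      obtain ⟨z, rfl⟩ := hy
      simp only [horthS, mul_ite, mul_zero]
      have hterm : ∀ x, (if z = x then 2 * (1/2:ℂ) else 0) • S x = if z = x then S x else 0 := by
        intro x; split <;> norm_num
      rw [Finset.sum_congr rfl fun x _ => hterm x, Finset.sum_ite_eq]
      simp
    | zero => simp
    | add u v hu hv ihu ihv =>
      conv_rhs => rw [← ihu, ← ihv]
      rw [← Finset.sum_add_distrib]
      refine Finset.sum_congr rfl fun x _ => ?_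
      rw [Matrix.add_mul, Matrix.trace_add, ← add_smul]
      ring_nf
    | smul r u hu ihu =>
      conv_rhs => rw [← ihu]
      rw [Finset.smul_sum]
      refine Finset.sum_congr rfl fun x _ => ?_
      rw [Matrix.smul_mul, Matrix.trace_smul, smul_smul, smul_eq_mul]
      congr 1
      ring
  have key2 : ∀ (p q k' l' : Fin N),
      (∑ x, 2 * (S x) q p * (S x) k' l')
        = (if p = k' then (1:ℂ) else 0) * (if q = l' then 1 else 0) := by
    intro p q k' l'
    have h := congrArg (fun M : Matrix (Fin N) (Fin N) ℂ => M k' l') (key (Matrix.single p q 1))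
    simp only [Matrix.sum_apply, Matrix.smul_apply, smul_eq_mul, trace_stdBasis_mul] at h
    rw [h]
    by_cases h1 : p = k' <;> by_cases h2 : q = l' <;>
      simp [Matrix.single, Matrix.of_apply, h1, h2]
  have h := key2 j i k l
  rw [Fintype.sum_sum_type] at h
  simp only [hS, Sum.elim_inl, Sum.elim_inr, Finset.univ_unique, Finset.sum_const,
    Finset.card_singleton, one_smul] at h
  have hone : ∀ (u v : Fin N),
      (c • (1:Matrix (Fin N) (Fin N) ℂ)) u v = c * (if u = v then 1 else 0) := by
    intro u v; simp [Matrix.smul_apply, Matrix.one_apply]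
  rw [hone, hone] at h
  have hexp : (∑ x, 2 * T x i j * T x k l) = 2 * ∑ a, T a i j * T a k l := by
    rw [Finset.mul_sum]; exact Finset.sum_congr rfl fun a _ => by ring
  rw [hexp] at h
  have hcc : 2 * (c * (if i = j then (1:ℂ) else 0)) * (c * (if k = l then 1 else 0))
      = (1/(N:ℂ)) * ((if i = j then (1:ℂ) else 0) * (if k = l then 1 else 0)) := by
    have h2cc : 2 * (c*c) = 1/(N:ℂ) := by rw [hc2]; field_simp
    calc 2 * (c * (if i = j then (1:ℂ) else 0)) * (c * (if k = l then 1 else 0))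
        = (2 * (c*c)) * ((if i = j then (1:ℂ) else 0) * (if k = l then 1 else 0)) := by ring
      _ = _ := by rw [h2cc]
  rw [hcc] at h
  linear_combination h / 2

/-! ### Grassmann-algebra machinery -/

abbrev VN (N : ℕ) := ((Fin 4 × Fin N) → ℂ) × ((Fin 4 × Fin N) → ℂ)

lemma ιswap {N : ℕ} (u v : VN N) :
    ExteriorAlgebra.ι ℂ u * ExteriorAlgebra.ι ℂ v
      = -(ExteriorAlgebra.ι ℂ v * ExteriorAlgebra.ι ℂ u) :=
  eq_neg_of_add_eq_zero_left (ExteriorAlgebra.ι_add_mul_swap u v)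

lemma swap24 {N : ℕ} (u1 u2 u3 u4 : VN N) :
    ExteriorAlgebra.ι ℂ u1 * ExteriorAlgebra.ι ℂ u2 *
      (ExteriorAlgebra.ι ℂ u3 * ExteriorAlgebra.ι ℂ u4)
    = -(ExteriorAlgebra.ι ℂ u1 * ExteriorAlgebra.ι ℂ u4 *
        (ExteriorAlgebra.ι ℂ u3 * ExteriorAlgebra.ι ℂ u2)) := by
  set x1 := ExteriorAlgebra.ι ℂ u1
  set x2 := ExteriorAlgebra.ι ℂ u2
  set x3 := ExteriorAlgebra.ι ℂ u3
  set x4 := ExteriorAlgebra.ι ℂ u4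
  calc x1 * x2 * (x3 * x4) = x1 * ((x2 * x3) * x4) := by rw [mul_assoc, mul_assoc]
    _ = x1 * ((-(x3 * x2)) * x4) := by rw [ιswap u2 u3]
    _ = -(x1 * (x3 * (x2 * x4))) := by rw [neg_mul, mul_neg, mul_assoc]
    _ = -(x1 * (x3 * (-(x4 * x2)))) := by rw [ιswap u2 u4]
    _ = x1 * ((x3 * x4) * x2) := by rw [mul_neg, mul_neg, neg_neg, mul_assoc]
    _ = x1 * (-(x4 * x3) * x2) := by rw [ιswap u3 u4]
    _ = -(x1 * x4 * (x3 * x2)) := by rw [neg_mul, mul_neg, mul_assoc, mul_assoc]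

lemma P_swap {N : ℕ} (A B C D : Fin 4) (i j k l : Fin N) :
    ψbar N A i * ψv N B j * (ψbar N C k * ψv N D l)
      = -(ψbar N A i * ψv N D l * (ψbar N C k * ψv N B j)) :=
  swap24 _ _ _ _

def GG (N : ℕ) (c : Idx4 → ℂ) (x : Fin N × Fin N × Fin N × Fin N → ℂ) : GrassAlg N :=
  ∑ p : (Fin N × Fin N × Fin N × Fin N) × Idx4,
    (x p.1 * c p.2) •
      (ψbar N p.2.1 p.1.1 * ψv N p.2.2.1 p.1.2.1 *
        (ψbar N p.2.2.2.1 p.1.2.2.1 * ψv N p.2.2.2.2 p.1.2.2.2))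

lemma mul_expand {N : ℕ} {α β : Type*} [Fintype α] [Fintype β]
    (f : α → ℂ) (g : β → ℂ) (u : α → GrassAlg N) (v : β → GrassAlg N) :
    (∑ a, f a • u a) * (∑ b, g b • v b) = ∑ a, ∑ b, (f a * g b) • (u a * v b) := by
  rw [Finset.sum_mul]
  refine Finset.sum_congr rfl fun a _ => ?_
  rw [smul_mul_assoc, Finset.mul_sum, Finset.smul_sum]
  refine Finset.sum_congr rfl fun b _ => ?_
  rw [mul_smul_comm, smul_smul]

lemma pairing_mul {N : ℕ} (Γ Δ : Matrix (Fin 4) (Fin 4) ℂ)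
    (X Y : Matrix (Fin N) (Fin N) ℂ) :
    pairing N Γ X * pairing N Δ Y
      = GG N (fun d => Γ d.1 d.2.1 * Δ d.2.2.1 d.2.2.2)
          (fun q => X q.1 q.2.1 * Y q.2.2.1 q.2.2.2) := by
  have hp : ∀ (Θ : Matrix (Fin 4) (Fin 4) ℂ) (Z : Matrix (Fin N) (Fin N) ℂ),
      pairing N Θ Z = ∑ q : Fin N × Fin N, Z q.1 q.2 •
        (∑ d : Fin 4 × Fin 4, Θ d.1 d.2 • (ψbar N d.1 q.1 * ψv N d.2 q.2)) := by
    intro Θ Z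
    rw [pairing]
    rw [Fintype.sum_prod_type]
    refine Finset.sum_congr rfl fun i _ => Finset.sum_congr rfl fun j _ => ?_
    rw [Bgr, Fintype.sum_prod_type]
  rw [hp, hp, mul_expand]
  have hin : ∀ (q1 q2 : Fin N × Fin N),
      (X q1.1 q1.2 * Y q2.1 q2.2) •
        ((∑ d : Fin 4 × Fin 4, Γ d.1 d.2 • (ψbar N d.1 q1.1 * ψv N d.2 q1.2)) *
         (∑ d : Fin 4 × Fin 4, Δ d.1 d.2 • (ψbar N d.1 q2.1 * ψv N d.2 q2.2)))
      = ∑ d1 : Fin 4 × Fin 4, ∑ d2 : Fin 4 × Fin 4,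
          ((X q1.1 q1.2 * Y q2.1 q2.2) * (Γ d1.1 d1.2 * Δ d2.1 d2.2)) •
            (ψbar N d1.1 q1.1 * ψv N d1.2 q1.2 * (ψbar N d2.1 q2.1 * ψv N d2.2 q2.2)) := by
    intro q1 q2
    rw [mul_expand, Finset.smul_sum]
    refine Finset.sum_congr rfl fun d1 _ => ?_
    rw [Finset.smul_sum]
    refine Finset.sum_congr rfl fun d2 _ => ?_
    rw [smul_smul]
  rw [Finset.sum_congr rfl fun q1 _ => Finset.sum_congr rfl fun q2 _ => hin q1 q2]
  rw [GG]
  simp only [Fintype.sum_prod_type]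

lemma GG_sum {N : ℕ} {α : Type*} [Fintype α] (c : Idx4 → ℂ)
    (x : α → Fin N × Fin N × Fin N × Fin N → ℂ) :
    ∑ a : α, GG N c (x a) = GG N c (fun q => ∑ a, x a q) := by
  simp only [GG]
  rw [Finset.sum_comm]
  refine Finset.sum_congr rfl fun p _ => ?_
  rw [← Finset.sum_smul, ← Finset.sum_mul]

lemma GG_csum {N : ℕ} {α : Type*} [Fintype α] (w : α → ℂ) (c : α → Idx4 → ℂ)
    (x : Fin N × Fin N × Fin N × Fin N → ℂ) :
    ∑ a : α, w a • GG N (c a) x = GG N (fun d => ∑ a, w a * c a d) x := by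
  simp only [GG, Finset.smul_sum, smul_smul]
  rw [Finset.sum_comm]
  refine Finset.sum_congr rfl fun p _ => ?_
  rw [← Finset.sum_smul, Finset.mul_sum]
  congr 1
  exact Finset.sum_congr rfl fun a _ => by ring

lemma GG_sum_c {N : ℕ} {α : Type*} [Fintype α] (c : α → Idx4 → ℂ)
    (x : Fin N × Fin N × Fin N × Fin N → ℂ) :
    ∑ a : α, GG N (c a) x = GG N (fun d => ∑ a, c a d) x := by
  have := GG_csum (N := N) (fun _ : α => (1:ℂ)) c x
  simpa using this

lemma GG_csum2 {N : ℕ} {α β : Type*} [Fintype α] [Fintype β]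
    (w : α → β → ℂ) (c : α → β → Idx4 → ℂ) (x : Fin N × Fin N × Fin N × Fin N → ℂ) :
    ∑ a : α, ∑ b : β, w a b • GG N (c a b) x
      = GG N (fun d => ∑ a, ∑ b, w a b * c a b d) x := by
  rw [Finset.sum_congr rfl fun a _ => GG_csum (w a) (c a) x]
  exact GG_sum_c _ x

lemma GG_x_congr {N : ℕ} (c : Idx4 → ℂ) (x x' : Fin N × Fin N × Fin N × Fin N → ℂ)
    (h : ∀ q, x q = x' q) : GG N c x = GG N c x' := by
  simp only [GG]
  exact Finset.sum_congr rfl fun p _ => by rw [h]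

lemma GG_c_congr {N : ℕ} (c c' : Idx4 → ℂ) (x : Fin N × Fin N × Fin N × Fin N → ℂ)
    (h : ∀ d, c d = c' d) : GG N c x = GG N c' x := by
  simp only [GG]
  exact Finset.sum_congr rfl fun p _ => by rw [h]

lemma GG_x_lin {N : ℕ} (c : Idx4 → ℂ) (x y : Fin N × Fin N × Fin N × Fin N → ℂ) (s t : ℂ) :
    GG N c (fun q => s * x q + t * y q) = s • GG N c x + t • GG N c y := by
  simp only [GG, Finset.smul_sum, smul_smul, ← Finset.sum_add_distrib]
  refine Finset.sum_congr rfl fun p _ => ?_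
  rw [← add_smul]
  congr 1
  ring

lemma GG_c_lin3 {N : ℕ} (c c' c'' : Idx4 → ℂ) (x : Fin N × Fin N × Fin N × Fin N → ℂ)
    (s t u : ℂ) :
    s • GG N c x + t • GG N c' x + u • GG N c'' x
      = GG N (fun d => s * c d + t * c' d + u * c'' d) x := by
  simp only [GG, Finset.smul_sum, smul_smul, ← Finset.sum_add_distrib]
  refine Finset.sum_congr rfl fun p _ => ?_
  rw [← add_smul, ← add_smul]
  congr 1
  ring

lemma GG_c_lin2 {N : ℕ} (c c' : Idx4 → ℂ) (x : Fin N × Fin N × Fin N × Fin N → ℂ) (s t : ℂ) :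
    s • GG N c x + t • GG N c' x = GG N (fun d => s * c d + t * c' d) x := by
  simp only [GG, Finset.smul_sum, smul_smul, ← Finset.sum_add_distrib]
  refine Finset.sum_congr rfl fun p _ => ?_
  rw [← add_smul]
  congr 1
  ring

def flip4 {α : Type*} : α × α × α × α → α × α × α × α :=
  fun t => (t.1, t.2.2.2, t.2.2.1, t.2.1)

def flipEquiv (N : ℕ) : ((Fin N × Fin N × Fin N × Fin N) × Idx4) ≃
    ((Fin N × Fin N × Fin N × Fin N) × Idx4) where
  toFun p := (flip4 p.1, flip4 p.2)
  invFun p := (flip4 p.1, flip4 p.2)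
  left_inv := by rintro ⟨⟨i,j,k,l⟩,⟨A,B,C,D⟩⟩; rfl
  right_inv := by rintro ⟨⟨i,j,k,l⟩,⟨A,B,C,D⟩⟩; rfl

lemma GG_flip {N : ℕ} (c : Idx4 → ℂ) (x : Fin N × Fin N × Fin N × Fin N → ℂ) :
    GG N c x = GG N (fun d => -c (flip4 d)) (fun q => x (flip4 q)) := by
  simp only [GG]
  refine Fintype.sum_equiv (flipEquiv N) _ _ ?_
  rintro ⟨⟨i,j,k,l⟩,⟨A,B,C,D⟩⟩
  show (x (i,j,k,l) * c (A,B,C,D)) • (ψbar N A i * ψv N B j * (ψbar N C k * ψv N D l)) = _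
  rw [P_swap]
  show _ = (x (i,j,k,l) * -(c (A,B,C,D))) • (ψbar N A i * ψv N D l * (ψbar N C k * ψv N B j))
  rw [mul_neg, neg_smul, smul_neg]

def δex (N : ℕ) : Fin N × Fin N × Fin N × Fin N → ℂ := fun q =>
  (if q.1 = q.2.2.2 then 1 else 0) * (if q.2.1 = q.2.2.1 then 1 else 0)

def δsg (N : ℕ) : Fin N × Fin N × Fin N × Fin N → ℂ := fun q =>
  (if q.1 = q.2.1 then 1 else 0) * (if q.2.2.1 = q.2.2.2 then 1 else 0)

/-- **Tensor Fierz identity for U(N) fermions.** -/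
theorem fierz_tensor (N : ℕ) (hN : 2 ≤ N)
    (T : Fin (N ^ 2 - 1) → Matrix (Fin N) (Fin N) ℂ)
    (htr : ∀ a, (T a).trace = 0)
    (hherm : ∀ a, (T a)ᴴ = T a)
    (horth : ∀ a b, (T a * T b).trace = if a = b then (1 / 2 : ℂ) else 0) :
    ∑ a, ∑ μ, ∑ ν, ((εs μ : ℂ) * (εs ν : ℂ)) •
        (pairing N (σm μ ν) (T a) * pairing N (σm μ ν) (T a)) =
      (-(3 / 2) : ℂ) • (sing N 1 * sing N 1)
        + (((N : ℂ) - 2) / (4 * (N : ℂ))) • ∑ μ, ∑ ν, ((εs μ : ℂ) * (εs ν : ℂ)) •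
            (sing N (σm μ ν) * sing N (σm μ ν))
        - (3 / 2 : ℂ) • (sing N γ5 * sing N γ5) := by
  have hN0 : (N:ℂ) ≠ 0 := by
    simp only [ne_eq, Nat.cast_eq_zero]; omega
  have hcompl : ∀ q : Fin N × Fin N × Fin N × Fin N,
      (∑ a, T a q.1 q.2.1 * T a q.2.2.1 q.2.2.2)
        = (1/2 : ℂ) * δex N q + (-(1/(2*(N:ℂ)))) * δsg N q := by
    rintro ⟨i,j,k,l⟩
    rw [completeness N hN T htr horth i j k l]
    simp only [δex, δsg]
    ring
  have hflipx : ∀ q : Fin N × Fin N × Fin N × Fin N, δex N (flip4 q) = δsg N q := by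
    rintro ⟨i,j,k,l⟩
    simp only [δex, δsg, flip4]
    by_cases h1 : i = j <;> by_cases h2 : k = l <;> simp [h1, h2, eq_comm]
  have hone4 : ∀ q : Fin N × Fin N × Fin N × Fin N,
      (1 : Matrix (Fin N) (Fin N) ℂ) q.1 q.2.1 * (1 : Matrix (Fin N) (Fin N) ℂ) q.2.2.1 q.2.2.2
        = δsg N q := by
    rintro ⟨i,j,k,l⟩
    simp [Matrix.one_apply, δsg]
  -- LHS
  have hL : (∑ a, ∑ μ, ∑ ν, ((εs μ : ℂ) * (εs ν : ℂ)) •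
        (pairing N (σm μ ν) (T a) * pairing N (σm μ ν) (T a)))
      = GG N (fun d => (1/2 : ℂ) * -ScC4 (flip4 d) + (-(1/(2*(N:ℂ)))) * ScC4 d) (δsg N) := by
    simp only [pairing_mul]
    rw [Finset.sum_congr rfl fun a _ => GG_csum2
      (fun μ ν => ((εs μ : ℂ) * (εs ν : ℂ)))
      (fun μ ν d => σm μ ν d.1 d.2.1 * σm μ ν d.2.2.1 d.2.2.2)
      (fun q => T a q.1 q.2.1 * T a q.2.2.1 q.2.2.2)]
    rw [show (fun d : Idx4 => ∑ μ : Fin 4, ∑ ν : Fin 4, ((εs μ : ℂ) * (εs ν : ℂ)) *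
        (σm μ ν d.1 d.2.1 * σm μ ν d.2.2.1 d.2.2.2)) = ScC4 from rfl,
      GG_sum]
    rw [GG_x_congr ScC4 _ (fun q => (1/2 : ℂ) * δex N q + (-(1/(2*(N:ℂ)))) * δsg N q) hcompl]
    rw [GG_x_lin]
    rw [GG_flip ScC4 (δex N)]
    rw [GG_x_congr _ _ (δsg N) hflipx]
    rw [GG_c_lin2]
  -- RHS
  have hR : ((-(3 / 2) : ℂ) • (sing N 1 * sing N 1)
        + (((N : ℂ) - 2) / (4 * (N : ℂ))) • ∑ μ, ∑ ν, ((εs μ : ℂ) * (εs ν : ℂ)) •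
            (sing N (σm μ ν) * sing N (σm μ ν))
        - (3 / 2 : ℂ) • (sing N γ5 * sing N γ5))
      = GG N (fun d => (-(3/2) : ℂ) * ((1 : Matrix (Fin 4) (Fin 4) ℂ) d.1 d.2.1 *
            (1 : Matrix (Fin 4) (Fin 4) ℂ) d.2.2.1 d.2.2.2)
          + (((N : ℂ) - 2) / (4 * (N : ℂ))) * ScC4 d
          + (-(3/2) : ℂ) * (γ5 d.1 d.2.1 * γ5 d.2.2.1 d.2.2.2)) (δsg N) := by
    simp only [sing, pairing_mul]
    rw [GG_csum2 (fun μ ν => ((εs μ : ℂ) * (εs ν : ℂ)))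
      (fun μ ν d => σm μ ν d.1 d.2.1 * σm μ ν d.2.2.1 d.2.2.2)
      (fun q => (1 : Matrix (Fin N) (Fin N) ℂ) q.1 q.2.1 *
        (1 : Matrix (Fin N) (Fin N) ℂ) q.2.2.1 q.2.2.2)]
    rw [show (fun d : Idx4 => ∑ μ : Fin 4, ∑ ν : Fin 4, ((εs μ : ℂ) * (εs ν : ℂ)) *
        (σm μ ν d.1 d.2.1 * σm μ ν d.2.2.1 d.2.2.2)) = ScC4 from rfl]
    rw [GG_x_congr _ _ (δsg N) hone4, GG_x_congr _ _ (δsg N) hone4,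
      GG_x_congr _ _ (δsg N) hone4]
    rw [sub_eq_add_neg, ← neg_smul]
    rw [GG_c_lin3]
  rw [hL, hR]
  refine GG_c_congr _ _ _ ?_
  rintro ⟨A,B,C,D⟩
  show (1/2 : ℂ) * -ScC4 (A,D,C,B) + (-(1/(2*(N:ℂ)))) * ScC4 (A,B,C,D) = _
  rw [keyC A B C D]
  simp only [Matrix.one_apply]
  set s := ScC4 (A,B,C,D) with hs
  set g := γ5 A B * γ5 C D with hg
  set u := (if A = B then (1:ℂ) else 0) with hu
  set v := (if C = D then (1:ℂ) else 0) with hv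
  field_simp
  ring
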